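/- Let m1,m2,n1,n2 ≥ 0 with min(m2,n2) > 0. Define ²S(m1,m2,n1,n2) ⊂ Z_+^3 as the union of {(b,0,d) : d ≤ min(m2,n2), b+d ≤ min(m1+m2,n1+n2), b ≤ m1+n1, 2d+b ≤ m2+n2} and {(b,c,0) : c ≥ 1, b+c ≤ min(m1+m2,n1+n2), b ≤ m2+n2, b+2c ≤ m1+n1}. Then the map sending (b,0,d) to (b,0,d+1) and (b,c,0) (c ≥ 1) to (b+2,c−1,0) is an injection from ²S(m1,m2−1,n1,n2−1) into ²S(m1,m2,n1,n2), whose image misses exactly the points of the form (b,c,0) with b ≤ 1. -/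
import Mathlib


/-- The reduced lattice set ²S^C of the type C2 fusion polytope, a union of
triples (b,0,d) and (b,c,0) with c ≥ 1. -/
def S2set (m1 m2 n1 n2 : ℤ) : Set (ℤ × ℤ × ℤ) :=
  {p | (p.2.1 = 0 ∧ 0 ≤ p.1 ∧ 0 ≤ p.2.2 ∧ p.2.2 ≤ min m2 n2 ∧
          p.1 + p.2.2 ≤ min (m1 + m2) (n1 + n2) ∧ p.1 ≤ m1 + n1 ∧
          2 * p.2.2 + p.1 ≤ m2 + n2) ∨
       (p.2.2 = 0 ∧ 0 ≤ p.1 ∧ 1 ≤ p.2.1 ∧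
          p.1 + p.2.1 ≤ min (m1 + m2) (n1 + n2) ∧ p.1 ≤ m2 + n2 ∧
          p.1 + 2 * p.2.1 ≤ m1 + n1)}

/-- The map (b,0,d) ↦ (b,0,d+1), (b,c,0) ↦ (b+2,c-1,0) is an injection from
²S(m1,m2-1,n1,n2-1) into ²S(m1,m2,n1,n2) missing exactly the points (b,c,0)
with b ≤ 1. -/
theorem stmt_9 (m1 m2 n1 n2 : ℤ) (hm1 : 0 ≤ m1) (hn1 : 0 ≤ n1)
    (h : 0 < min m2 n2) :
    Set.InjOn
      (fun p : ℤ × ℤ × ℤ =>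
        if p.2.1 = 0 then (p.1, 0, p.2.2 + 1) else (p.1 + 2, p.2.1 - 1, 0))
      (S2set m1 (m2 - 1) n1 (n2 - 1)) ∧
    (fun p : ℤ × ℤ × ℤ =>
        if p.2.1 = 0 then (p.1, 0, p.2.2 + 1) else (p.1 + 2, p.2.1 - 1, 0)) ''
        (S2set m1 (m2 - 1) n1 (n2 - 1)) =
      S2set m1 m2 n1 n2 \ {p | p.2.2 = 0 ∧ p.1 ≤ 1} := by
  constructor
  · rintro ⟨b, c, d⟩ hp ⟨b', c', d'⟩ hq heq
    simp only [S2set, Set.mem_setOf_eq] at hp hq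
    by_cases hc : c = 0 <;> by_cases hc' : c' = 0 <;>
      simp only [hc, hc', if_pos, if_neg, if_true, reduceIte, Prod.mk.injEq] at heq <;>
      simp only [Prod.mk.injEq] <;> omega
  · ext ⟨b, c, d⟩
    simp only [Set.mem_image, Set.mem_diff, Set.mem_setOf_eq, S2set, Prod.mk.injEq]
    constructor
    · rintro ⟨⟨a, e, f⟩, hmem, heq⟩
      simp only [Set.mem_setOf_eq] at hmem
      by_cases he : e = 0 <;>
        simp only [he, if_pos, if_neg, reduceIte, Prod.mk.injEq] at heq <;> omega
    · rintro ⟨hmem, hnot⟩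
      have hmin1 : min (m1 + (m2 - 1)) (n1 + (n2 - 1)) = min (m1 + m2) (n1 + n2) - 1 := by omega
      have hmin2 : min (m2 - 1) (n2 - 1) = min m2 n2 - 1 := by omega
      rcases hmem with ⟨hc0, hb, hd, h1, h2, h3, h4⟩ | ⟨hd0, hb, hc, h1, h2, h3⟩
      · by_cases hd1 : 1 ≤ d
        · refine ⟨(b, 0, d - 1), ?_, ?_⟩
          · simp only [Set.mem_setOf_eq, hmin1, hmin2, true_and, and_true]; omega
          · simp only [reduceIte, Prod.mk.injEq, true_and]; omega
        · refine ⟨(b - 2, 1, 0), ?_, ?_⟩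
          · simp only [Set.mem_setOf_eq, hmin1, hmin2, true_and, and_true]; omega
          · have h10 : (1:ℤ) ≠ 0 := one_ne_zero
            simp only [if_neg h10, Prod.mk.injEq]; omega
      · refine ⟨(b - 2, c + 1, 0), ?_, ?_⟩
        · simp only [Set.mem_setOf_eq, hmin1, hmin2, true_and, and_true]; omega
        · have : ¬ (c + 1 = 0) := by omega
          simp only [this, if_neg, reduceIte, Prod.mk.injEq]; omega
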